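/- The operator L admits the reversed factorized form L = →∏_{a=1}^{N+1}( x_a(· + N + 1 − 2a + s) − D ): that is, for every function w : ℂ → ℂ and every u ∈ ℂ, (Lw)(u) = (Mw)(u), where M is the ordered composition over a = 1, …, N+1 (the factor a = 1 outermost) of the operators ((f − D)w)(u) := f(u)·w(u) − w(u+2) with f(u) = x_a(u + N + 1 − 2a + s). -/

import Mathlib

open Complex

noncomputable def oneSubXD (x w : ℂ → ℂ) : ℂ → ℂ := fun u => w u - x u * w (u + 2)

noncomputable def Lop (x : ℕ → ℂ → ℂ) : ℕ → (ℂ → ℂ) → (ℂ → ℂ)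
  | 0 => fun w => w
  | k + 1 => fun w => oneSubXD (x (k + 1)) (Lop x k w)

noncomputable def FsubD (f w : ℂ → ℂ) : ℂ → ℂ := fun u => f u * w u - w (u + 2)

noncomputable def Mop (f : ℕ → ℂ → ℂ) (Nv : ℕ) : ℕ → (ℂ → ℂ) → (ℂ → ℂ)
  | 0 => fun w => w
  | a + 1 => fun w => FsubD (f (Nv + 1 - a)) (Mop f Nv a w)

noncomputable def psiF (n : ℕ) (s : ℂ) (Q : ℕ → ℂ → ℂ) (k : ℕ) (u : ℂ) : ℂ :=
  if k = 0 then 1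
  else if k ≤ n then Q k (u + k - 1) / Q (k - 1) (u + k)
  else if k = n + 1 then Q n (u + n + s) / Q n (u + n + 1)
  else if k ≤ 2 * n + 1 then
    Q (2 * n + 1 - k) (u + k - 1 + s) / Q (2 * n + 2 - k) (u + k + s)
  else 1

lemma psiF_zero (n : ℕ) (s : ℂ) (Q : ℕ → ℂ → ℂ) (u : ℂ) : psiF n s Q 0 u = 1 := by
  simp [psiF]

lemma psiF_mid (n : ℕ) (s : ℂ) (Q : ℕ → ℂ → ℂ) (k : ℕ) (u : ℂ)
    (hk1 : 1 ≤ k) (hk2 : k ≤ n) :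
    psiF n s Q k u = Q k (u + k - 1) / Q (k - 1) (u + k) := by
  rw [psiF, if_neg (by omega), if_pos hk2]

lemma psiF_np1 (n : ℕ) (s : ℂ) (Q : ℕ → ℂ → ℂ) (u : ℂ) :
    psiF n s Q (n + 1) u = Q n (u + n + s) / Q n (u + n + 1) := by
  rw [psiF, if_neg (by omega), if_neg (by omega), if_pos rfl]

lemma psiF_bar (n : ℕ) (s : ℂ) (Q : ℕ → ℂ → ℂ) (k : ℕ) (u : ℂ)
    (hk1 : n + 2 ≤ k) (hk2 : k ≤ 2 * n + 1) :
    psiF n s Q k u = Q (2 * n + 1 - k) (u + k - 1 + s) / Q (2 * n + 2 - k) (u + k + s) := by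
  rw [psiF, if_neg (by omega), if_neg (by omega), if_neg (by omega), if_pos hk2]

lemma psiF_top (n : ℕ) (s : ℂ) (Q : ℕ → ℂ → ℂ) (k : ℕ) (u : ℂ)
    (hk : 2 * n + 2 ≤ k) : psiF n s Q k u = 1 := by
  rw [psiF, if_neg (by omega), if_neg (by omega), if_neg (by omega), if_neg (by omega)]

lemma ratio_pattern (A1 A2 B1 B2 : ℂ) (h2 : A2 ≠ 0) (h3 : B1 ≠ 0) (h4 : B2 ≠ 0) :
    A1 / A2 / (B1 / B2) * (A2 / B2) = A1 / B1 := by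
  field_simp

lemma Qne' (n : ℕ) (Q : ℕ → ℂ → ℂ) (hQ0 : ∀ u, Q 0 u = 1)
    (hQne : ∀ a, 1 ≤ a → a ≤ n → ∀ u, Q a u ≠ 0) (a : ℕ) (ha : a ≤ n) (u : ℂ) :
    Q a u ≠ 0 := by
  rcases Nat.eq_zero_or_pos a with rfl | hpos
  · rw [hQ0]; exact one_ne_zero
  · exact hQne a hpos ha u

lemma psiF_ne (n : ℕ) (s : ℂ) (Q : ℕ → ℂ → ℂ) (hQ0 : ∀ u, Q 0 u = 1)
    (hQne : ∀ a, 1 ≤ a → a ≤ n → ∀ u, Q a u ≠ 0) (k : ℕ) (u : ℂ) :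
    psiF n s Q k u ≠ 0 := by
  have hQ := Qne' n Q hQ0 hQne
  rw [psiF]
  split_ifs with h1 h2 h3 h4
  · exact one_ne_zero
  · exact div_ne_zero (hQ k h2 _) (hQ (k - 1) (by omega) _)
  · exact div_ne_zero (hQ n le_rfl _) (hQ n le_rfl _)
  · exact div_ne_zero (hQ (2 * n + 1 - k) (by omega) _) (hQ (2 * n + 2 - k) (by omega) _)
  · exact one_ne_zero

lemma key_x (n : ℕ) (hn : 1 ≤ n) (s : ℂ) (Q Y x : ℕ → ℂ → ℂ)
    (hQ0 : ∀ u, Q 0 u = 1)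
    (hQne : ∀ a, 1 ≤ a → a ≤ n → ∀ u, Q a u ≠ 0)
    (hY : ∀ a u, Y a u = Q a (u - 1) / Q a (u + 1))
    (hxa : ∀ a, 1 ≤ a → a ≤ n → ∀ u : ℂ,
      x a u = Y a (u + a) / Y (a - 1) (u + a + 1))
    (hx0 : ∀ u : ℂ, x (n + 1) u = Y n (u + n + 1 + s) / Y n (u + n + 2))
    (hxbar : ∀ a, 1 ≤ a → a ≤ n → ∀ u : ℂ,
      x (2 * n - a + 2) u = Y (a - 1) (u + 2 * (n : ℂ) - a + 2 + s)
        / Y a (u + 2 * (n : ℂ) - a + 3 + s))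
    (k : ℕ) (hk1 : 1 ≤ k) (hk2 : k ≤ 2 * n + 1) (u : ℂ) :
    x k u * psiF n s Q k (u + 2) = psiF n s Q k u := by
  have hQ := Qne' n Q hQ0 hQne
  by_cases hk : k ≤ n
  · rw [hxa k hk1 hk, hY, hY, psiF_mid n s Q k (u + 2) hk1 hk, psiF_mid n s Q k u hk1 hk,
      show u + (k : ℂ) + 1 - 1 = u + k by ring,
      show u + (k : ℂ) + 1 + 1 = u + k + 2 by ring,
      show u + 2 + (k : ℂ) - 1 = u + k + 1 by ring,
      show u + 2 + (k : ℂ) = u + k + 2 by ring]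
    exact ratio_pattern _ _ _ _ (hQ k hk _) (hQ (k - 1) (by omega) _) (hQ (k - 1) (by omega) _)
  · by_cases hk' : k = n + 1
    · subst hk'
      rw [hx0, hY, hY, psiF_np1, psiF_np1,
        show u + (n : ℂ) + 1 + s - 1 = u + n + s by ring,
        show u + (n : ℂ) + 1 + s + 1 = u + n + 2 + s by ring,
        show u + (n : ℂ) + 2 - 1 = u + n + 1 by ring,
        show u + (n : ℂ) + 2 + 1 = u + n + 3 by ring,
        show u + 2 + (n : ℂ) + s = u + n + 2 + s by ring,
        show u + 2 + (n : ℂ) + 1 = u + n + 3 by ring]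
      exact ratio_pattern _ _ _ _ (hQ n le_rfl _) (hQ n le_rfl _) (hQ n le_rfl _)
    · have hk3 : n + 2 ≤ k := by omega
      set a := 2 * n + 2 - k with ha
      have ha1 : 1 ≤ a := by omega
      have ha2 : a ≤ n := by omega
      have hxb := hxbar a ha1 ha2 u
      rw [show 2 * n - a + 2 = k by omega] at hxb
      have hac : (a : ℂ) = 2 * (n : ℂ) + 2 - k := by
        rw [ha, Nat.cast_sub (by omega)]; push_cast; ring
      rw [hxb, hY, hY, psiF_bar n s Q k (u + 2) hk3 hk2, psiF_bar n s Q k u hk3 hk2,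
        show 2 * n + 1 - k = a - 1 by omega, ← ha, hac,
        show u + 2 * (n : ℂ) - (2 * (n : ℂ) + 2 - (k : ℂ)) + 2 + s - 1 = u + k - 1 + s by ring,
        show u + 2 * (n : ℂ) - (2 * (n : ℂ) + 2 - (k : ℂ)) + 2 + s + 1 = u + k + 1 + s by ring,
        show u + 2 * (n : ℂ) - (2 * (n : ℂ) + 2 - (k : ℂ)) + 3 + s - 1 = u + k + s by ring,
        show u + 2 * (n : ℂ) - (2 * (n : ℂ) + 2 - (k : ℂ)) + 3 + s + 1 = u + k + 2 + s by ring,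
        show u + 2 + (k : ℂ) - 1 + s = u + k + 1 + s by ring,
        show u + 2 + (k : ℂ) + s = u + k + 2 + s by ring]
      exact ratio_pattern _ _ _ _ (hQ (a - 1) (by omega) _) (hQ a ha2 _) (hQ a ha2 _)

noncomputable def hF (n : ℕ) (s : ℂ) (Q : ℕ → ℂ → ℂ) (k : ℕ) (v : ℂ) : ℂ :=
  psiF n s Q k (v + 2 * (n : ℂ) + 1 - 2 * k + s)

noncomputable def gLF (n : ℕ) (s : ℂ) (Q : ℕ → ℂ → ℂ) (j : ℕ) (v : ℂ) : ℂ :=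
  psiF n s Q j v / psiF n s Q (j + 1) v

noncomputable def gMF (n : ℕ) (s : ℂ) (Q : ℕ → ℂ → ℂ) (j : ℕ) (v : ℂ) : ℂ :=
  hF n s Q (2 * n + 1 - j) v / hF n s Q (2 * n + 2 - j) (v + 2)

noncomputable def hcF (hconst : ℕ → ℂ) (a : ℕ) : ℂ := if a = 0 then 1 else hconst a

noncomputable def cF (hconst : ℕ → ℂ) (n : ℕ) (j : ℕ) : ℂ :=
  if j = 0 then (hcF hconst 1)⁻¹
  else if j < n then hcF hconst j ^ 2 * (hcF hconst (j + 1) * hcF hconst (j - 1))⁻¹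
  else if j = n then hcF hconst n ^ 2 * (hcF hconst (n - 1))⁻¹
  else if j = n + 1 then (hcF hconst n)⁻¹
  else 1

lemma gM_eq (n : ℕ) (hn : 1 ≤ n) (s : ℂ) (Q : ℕ → ℂ → ℂ) (hconst : ℕ → ℂ)
    (hQ0 : ∀ u, Q 0 u = 1)
    (hQne : ∀ a, 1 ≤ a → a ≤ n → ∀ u, Q a u ≠ 0)
    (hper : ∀ a, a ≤ n → ∀ u, Q a (u + 2 * s) = hcF hconst a * Q a u)
    (hcne : ∀ a, a ≤ n → hcF hconst a ≠ 0)
    (j : ℕ) (hj : j ≤ 2 * n + 1) (v : ℂ) :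
    gMF n s Q j v = cF hconst n j * gLF n s Q j v := by
  have hQ := Qne' n Q hQ0 hQne
  by_cases h0 : j = 0
  · subst h0
    have e2 : hF n s Q (2 * n + 2) (v + 2) = 1 := by
      simp only [hF]; exact psiF_top n s Q _ _ le_rfl
    have e1 : hF n s Q (2 * n + 1) v = 1 / (hcF hconst 1 * Q 1 v) := by
      simp only [hF]
      rw [psiF_bar n s Q (2 * n + 1) _ (by omega) le_rfl,
        show 2 * n + 1 - (2 * n + 1) = 0 by omega,
        show 2 * n + 2 - (2 * n + 1) = 1 by omega, hQ0,
        show v + 2 * (n : ℂ) + 1 - 2 * ((2 * n + 1 : ℕ) : ℂ) + s + ((2 * n + 1 : ℕ) : ℂ) + s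
          = v + 2 * s by push_cast; ring,
        hper 1 hn v]
    have e3 : psiF n s Q 1 v = Q 1 v := by
      rw [psiF_mid n s Q 1 v le_rfl hn, show (1 : ℕ) - 1 = 0 by rfl, hQ0,
        show v + ((1 : ℕ) : ℂ) - 1 = v by push_cast; ring, div_one]
    simp only [gMF, gLF, Nat.sub_zero, Nat.zero_add, zero_add]
    rw [e1, e2, e3, psiF_zero, cF, if_pos rfl]
    field_simp
  · by_cases hjn : j < n
    · have hj1 : 1 ≤ j := by omega
      have e1 : hF n s Q (2 * n + 1 - j) v
          = hcF hconst j * Q j (v + j - 1) / (hcF hconst (j + 1) * Q (j + 1) (v + j)) := by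
        simp only [hF]
        rw [psiF_bar n s Q (2 * n + 1 - j) _ (by omega) (by omega),
          show 2 * n + 1 - (2 * n + 1 - j) = j by omega,
          show 2 * n + 2 - (2 * n + 1 - j) = j + 1 by omega,
          show v + 2 * (n : ℂ) + 1 - 2 * ((2 * n + 1 - j : ℕ) : ℂ) + s
              + ((2 * n + 1 - j : ℕ) : ℂ) - 1 + s = v + (j : ℂ) - 1 + 2 * s from by
            push_cast [Nat.cast_sub (show j ≤ 2 * n + 1 by omega)]; ring,
          show v + 2 * (n : ℂ) + 1 - 2 * ((2 * n + 1 - j : ℕ) : ℂ) + s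
              + ((2 * n + 1 - j : ℕ) : ℂ) + s = v + (j : ℂ) + 2 * s from by
            push_cast [Nat.cast_sub (show j ≤ 2 * n + 1 by omega)]; ring,
          hper j (by omega), hper (j + 1) (by omega)]
      have e2 : hF n s Q (2 * n + 2 - j) (v + 2)
          = hcF hconst (j - 1) * Q (j - 1) (v + j) / (hcF hconst j * Q j (v + j + 1)) := by
        simp only [hF]
        rw [psiF_bar n s Q (2 * n + 2 - j) _ (by omega) (by omega),
          show 2 * n + 1 - (2 * n + 2 - j) = j - 1 by omega,
          show 2 * n + 2 - (2 * n + 2 - j) = j by omega,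
          show v + 2 + 2 * (n : ℂ) + 1 - 2 * ((2 * n + 2 - j : ℕ) : ℂ) + s
              + ((2 * n + 2 - j : ℕ) : ℂ) - 1 + s = v + (j : ℂ) + 2 * s from by
            push_cast [Nat.cast_sub (show j ≤ 2 * n + 2 by omega)]; ring,
          show v + 2 + 2 * (n : ℂ) + 1 - 2 * ((2 * n + 2 - j : ℕ) : ℂ) + s
              + ((2 * n + 2 - j : ℕ) : ℂ) + s = v + (j : ℂ) + 1 + 2 * s from by
            push_cast [Nat.cast_sub (show j ≤ 2 * n + 2 by omega)]; ring,
          hper (j - 1) (by omega), hper j (by omega)]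
      have e3 : psiF n s Q j v = Q j (v + j - 1) / Q (j - 1) (v + j) :=
        psiF_mid n s Q j v hj1 (by omega)
      have e4 : psiF n s Q (j + 1) v = Q (j + 1) (v + j) / Q j (v + j + 1) := by
        rw [psiF_mid n s Q (j + 1) v (by omega) (by omega),
          show v + ((j + 1 : ℕ) : ℂ) - 1 = v + j from by push_cast; ring,
          show v + ((j + 1 : ℕ) : ℂ) = v + j + 1 from by push_cast; ring,
          show j + 1 - 1 = j by omega]
      rw [gMF, gLF, e1, e2, e3, e4, cF, if_neg h0, if_pos hjn]
      have n1 := hQ j (by omega) (v + (j : ℂ) - 1)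
      have n2 := hQ (j + 1) (by omega) (v + (j : ℂ))
      have n3 := hQ (j - 1) (by omega) (v + (j : ℂ))
      have n4 := hQ j (by omega) (v + (j : ℂ) + 1)
      have c1 := hcne j (by omega)
      have c2 := hcne (j + 1) (by omega)
      have c3 := hcne (j - 1) (by omega)
      field_simp
    · by_cases hjn2 : j = n
      · rw [hjn2]
        have e1 : hF n s Q (2 * n + 1 - n) v
            = hcF hconst n * Q n (v + n - 1) / Q n (v + n + s) := by
          rw [show 2 * n + 1 - n = n + 1 by omega]
          simp only [hF]
          rw [psiF_np1,
            show v + 2 * (n : ℂ) + 1 - 2 * ((n + 1 : ℕ) : ℂ) + s + n + s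
              = v + (n : ℂ) - 1 + 2 * s from by push_cast; ring,
            show v + 2 * (n : ℂ) + 1 - 2 * ((n + 1 : ℕ) : ℂ) + s + n + 1
              = v + (n : ℂ) + s from by push_cast; ring,
            hper n le_rfl]
        have e2 : hF n s Q (2 * n + 2 - n) (v + 2)
            = hcF hconst (n - 1) * Q (n - 1) (v + n) / (hcF hconst n * Q n (v + n + 1)) := by
          rw [show 2 * n + 2 - n = n + 2 by omega]
          simp only [hF]
          rw [psiF_bar n s Q (n + 2) _ le_rfl (by omega),
            show 2 * n + 1 - (n + 2) = n - 1 by omega,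
            show 2 * n + 2 - (n + 2) = n by omega,
            show v + 2 + 2 * (n : ℂ) + 1 - 2 * ((n + 2 : ℕ) : ℂ) + s
                + ((n + 2 : ℕ) : ℂ) - 1 + s = v + (n : ℂ) + 2 * s from by push_cast; ring,
            show v + 2 + 2 * (n : ℂ) + 1 - 2 * ((n + 2 : ℕ) : ℂ) + s
                + ((n + 2 : ℕ) : ℂ) + s = v + (n : ℂ) + 1 + 2 * s from by push_cast; ring,
            hper (n - 1) (by omega), hper n le_rfl]
        have e3 : psiF n s Q n v = Q n (v + n - 1) / Q (n - 1) (v + n) :=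
          psiF_mid n s Q n v hn le_rfl
        have e4 : psiF n s Q (n + 1) v = Q n (v + n + s) / Q n (v + n + 1) :=
          psiF_np1 n s Q v
        rw [gMF, gLF, e1, e2, e3, e4, cF, if_neg (show ¬n = 0 by omega),
          if_neg (lt_irrefl n), if_pos rfl]
        have n1 := hQ n le_rfl (v + (n : ℂ) - 1)
        have n2 := hQ n le_rfl (v + (n : ℂ) + s)
        have n3 := hQ (n - 1) (by omega) (v + (n : ℂ))
        have n4 := hQ n le_rfl (v + (n : ℂ) + 1)
        have c1 := hcne n le_rfl
        have c3 := hcne (n - 1) (by omega)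
        field_simp
      · by_cases hjn3 : j = n + 1
        · subst hjn3
          have e1 : hF n s Q (2 * n + 1 - (n + 1)) v
              = Q n (v + n + s) / Q (n - 1) (v + n + 1 + s) := by
            rw [show 2 * n + 1 - (n + 1) = n by omega]
            simp only [hF]
            rw [psiF_mid n s Q n _ hn le_rfl,
              show v + 2 * (n : ℂ) + 1 - 2 * (n : ℂ) + s + n - 1
                = v + (n : ℂ) + s from by push_cast; ring,
              show v + 2 * (n : ℂ) + 1 - 2 * (n : ℂ) + s + n
                = v + (n : ℂ) + 1 + s from by push_cast; ring]
          have e2 : hF n s Q (2 * n + 2 - (n + 1)) (v + 2)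
              = hcF hconst n * Q n (v + n + 1) / Q n (v + n + 2 + s) := by
            rw [show 2 * n + 2 - (n + 1) = n + 1 by omega]
            simp only [hF]
            rw [psiF_np1,
              show v + 2 + 2 * (n : ℂ) + 1 - 2 * ((n + 1 : ℕ) : ℂ) + s + n + s
                = v + (n : ℂ) + 1 + 2 * s from by push_cast; ring,
              show v + 2 + 2 * (n : ℂ) + 1 - 2 * ((n + 1 : ℕ) : ℂ) + s + n + 1
                = v + (n : ℂ) + 2 + s from by push_cast; ring,
              hper n le_rfl]
          have e3 : psiF n s Q (n + 1) v = Q n (v + n + s) / Q n (v + n + 1) :=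
            psiF_np1 n s Q v
          have e4 : psiF n s Q (n + 1 + 1) v
              = Q (n - 1) (v + n + 1 + s) / Q n (v + n + 2 + s) := by
            rw [show n + 1 + 1 = n + 2 by omega,
              psiF_bar n s Q (n + 2) v le_rfl (by omega),
              show 2 * n + 1 - (n + 2) = n - 1 by omega,
              show 2 * n + 2 - (n + 2) = n by omega,
              show v + ((n + 2 : ℕ) : ℂ) - 1 + s = v + (n : ℂ) + 1 + s from by push_cast; ring,
              show v + ((n + 2 : ℕ) : ℂ) + s = v + (n : ℂ) + 2 + s from by push_cast; ring]
          rw [gMF, gLF, e1, e2, e3, e4, cF, if_neg h0, if_neg hjn, if_neg hjn2, if_pos rfl]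
          have n1 := hQ n le_rfl (v + (n : ℂ) + s)
          have n2 := hQ (n - 1) (by omega) (v + (n : ℂ) + 1 + s)
          have n3 := hQ n le_rfl (v + (n : ℂ) + 1)
          have n4 := hQ n le_rfl (v + (n : ℂ) + 2 + s)
          have c1 := hcne n le_rfl
          field_simp
        · by_cases hjtop : j = 2 * n + 1
          · subst hjtop
            have e1 : hF n s Q (2 * n + 1 - (2 * n + 1)) v = 1 := by
              rw [show 2 * n + 1 - (2 * n + 1) = 0 by omega]
              simp only [hF]; exact psiF_zero n s Q _
            have e2 : hF n s Q (2 * n + 2 - (2 * n + 1)) (v + 2)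
                = Q 1 (v + 2 * (n : ℂ) + 1 + s) := by
              rw [show 2 * n + 2 - (2 * n + 1) = 1 by omega]
              simp only [hF]
              rw [psiF_mid n s Q 1 _ le_rfl hn, show (1 : ℕ) - 1 = 0 by rfl, hQ0, div_one,
                show v + 2 + 2 * (n : ℂ) + 1 - 2 * ((1 : ℕ) : ℂ) + s + ((1 : ℕ) : ℂ) - 1
                  = v + 2 * (n : ℂ) + 1 + s from by push_cast; ring]
            have e3 : psiF n s Q (2 * n + 1) v = 1 / Q 1 (v + 2 * (n : ℂ) + 1 + s) := by
              rw [psiF_bar n s Q (2 * n + 1) v (by omega) le_rfl,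
                show 2 * n + 1 - (2 * n + 1) = 0 by omega,
                show 2 * n + 2 - (2 * n + 1) = 1 by omega, hQ0,
                show v + ((2 * n + 1 : ℕ) : ℂ) + s = v + 2 * (n : ℂ) + 1 + s from by
                  push_cast; ring]
            have e4 : psiF n s Q (2 * n + 1 + 1) v = 1 :=
              psiF_top n s Q _ _ (by omega)
            rw [gMF, gLF, e1, e2, e3, e4, cF, if_neg h0, if_neg hjn, if_neg hjn2, if_neg hjn3]
            have n1 := hQ 1 hn (v + 2 * (n : ℂ) + 1 + s)
            field_simp
          · have hj2 : n + 2 ≤ j := by omega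
            have hj3 : j ≤ 2 * n := by omega
            have e1 : hF n s Q (2 * n + 1 - j) v
                = Q (2 * n + 1 - j) (v + j - 1 + s) / Q (2 * n - j) (v + j + s) := by
              simp only [hF]
              rw [psiF_mid n s Q (2 * n + 1 - j) _ (by omega) (by omega),
                show 2 * n + 1 - j - 1 = 2 * n - j by omega,
                show v + 2 * (n : ℂ) + 1 - 2 * ((2 * n + 1 - j : ℕ) : ℂ) + s
                    + ((2 * n + 1 - j : ℕ) : ℂ) - 1 = v + (j : ℂ) - 1 + s from by
                  push_cast [Nat.cast_sub (show j ≤ 2 * n + 1 by omega)]; ring,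
                show v + 2 * (n : ℂ) + 1 - 2 * ((2 * n + 1 - j : ℕ) : ℂ) + s
                    + ((2 * n + 1 - j : ℕ) : ℂ) = v + (j : ℂ) + s from by
                  push_cast [Nat.cast_sub (show j ≤ 2 * n + 1 by omega)]; ring]
            have e2 : hF n s Q (2 * n + 2 - j) (v + 2)
                = Q (2 * n + 2 - j) (v + j + s) / Q (2 * n + 1 - j) (v + j + 1 + s) := by
              simp only [hF]
              rw [psiF_mid n s Q (2 * n + 2 - j) _ (by omega) (by omega),
                show 2 * n + 2 - j - 1 = 2 * n + 1 - j by omega,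
                show v + 2 + 2 * (n : ℂ) + 1 - 2 * ((2 * n + 2 - j : ℕ) : ℂ) + s
                    + ((2 * n + 2 - j : ℕ) : ℂ) - 1 = v + (j : ℂ) + s from by
                  push_cast [Nat.cast_sub (show j ≤ 2 * n + 2 by omega)]; ring,
                show v + 2 + 2 * (n : ℂ) + 1 - 2 * ((2 * n + 2 - j : ℕ) : ℂ) + s
                    + ((2 * n + 2 - j : ℕ) : ℂ) = v + (j : ℂ) + 1 + s from by
                  push_cast [Nat.cast_sub (show j ≤ 2 * n + 2 by omega)]; ring]
            have e3 : psiF n s Q j v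
                = Q (2 * n + 1 - j) (v + j - 1 + s) / Q (2 * n + 2 - j) (v + j + s) :=
              psiF_bar n s Q j v (by omega) (by omega)
            have e4 : psiF n s Q (j + 1) v
                = Q (2 * n - j) (v + j + s) / Q (2 * n + 1 - j) (v + j + 1 + s) := by
              rw [psiF_bar n s Q (j + 1) v (by omega) (by omega),
                show 2 * n + 1 - (j + 1) = 2 * n - j by omega,
                show 2 * n + 2 - (j + 1) = 2 * n + 1 - j by omega,
                show v + ((j + 1 : ℕ) : ℂ) - 1 + s = v + (j : ℂ) + s from by push_cast; ring,
                show v + ((j + 1 : ℕ) : ℂ) + s = v + (j : ℂ) + 1 + s from by push_cast; ring]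
            rw [gMF, gLF, e1, e2, e3, e4, cF, if_neg h0, if_neg hjn, if_neg hjn2, if_neg hjn3]
            have n1 := hQ (2 * n - j) (by omega) (v + (j : ℂ) + s)
            have n2 := hQ (2 * n + 2 - j) (by omega) (v + (j : ℂ) + s)
            have n3 := hQ (2 * n + 1 - j) (by omega) (v + (j : ℂ) + 1 + s)
            rw [one_mul, div_div_div_comm]

noncomputable def Rop (g : ℕ → ℂ → ℂ) : ℕ → (ℂ → ℂ) → ℂ → ℂ
  | 0 => fun w u => g 0 u * w u
  | k + 1 => fun w u => g (k + 1) u * (Rop g k w u - Rop g k w (u + 2))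

lemma Rop_scale (g g' : ℕ → ℂ → ℂ) (c : ℕ → ℂ) (m : ℕ)
    (h : ∀ j, j ≤ m → ∀ u, g' j u = c j * g j u) :
    ∀ w u, Rop g' m w u = (∏ j ∈ Finset.range (m + 1), c j) * Rop g m w u := by
  induction m with
  | zero =>
    intro w u
    simp [Rop, h 0 le_rfl u]; ring
  | succ m ih =>
    intro w u
    have ih' := ih (fun j hj u => h j (by omega) u)
    simp only [Rop, ih', h (m + 1) le_rfl u, Finset.prod_range_succ]
    ring

lemma stepA (n : ℕ) (s : ℂ) (Q x : ℕ → ℂ → ℂ)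
    (hψne : ∀ k u, psiF n s Q k u ≠ 0)
    (hkey : ∀ k, 1 ≤ k → k ≤ 2 * n + 1 → ∀ u, x k u * psiF n s Q k (u + 2) = psiF n s Q k u)
    (w : ℂ → ℂ) :
    ∀ m, m ≤ 2 * n + 1 → ∀ v, Lop x m w v = psiF n s Q (m + 1) v * Rop (gLF n s Q) m w v := by
  intro m
  induction m with
  | zero =>
    intro _ v
    simp only [Lop, Rop, gLF, psiF_zero, Nat.zero_add, zero_add]
    field_simp
    exact (mul_div_cancel_right₀ (w v) (hψne 1 v)).symm
  | succ m ih =>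
    intro hm v
    have ihv := ih (by omega)
    have hx := hkey (m + 1) (by omega) (by omega) v
    have h2 := hψne (m + 1 + 1) v
    simp only [Lop, oneSubXD, Rop]
    rw [ihv v, ihv (v + 2), gLF]
    have hcancel : ∀ X : ℂ, psiF n s Q (m + 1 + 1) v
        * (psiF n s Q (m + 1) v / psiF n s Q (m + 1 + 1) v * X)
        = psiF n s Q (m + 1) v * X := by
      intro X; field_simp
    rw [hcancel]
    linear_combination (-(Rop (gLF n s Q) m w (v + 2))) * hx

lemma stepB (n : ℕ) (s : ℂ) (Q f : ℕ → ℂ → ℂ)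
    (hψne : ∀ k u, psiF n s Q k u ≠ 0)
    (hkeyf : ∀ k, 1 ≤ k → k ≤ 2 * n + 1 → ∀ v, f k v * hF n s Q k (v + 2) = hF n s Q k v)
    (w : ℂ → ℂ) :
    ∀ m, m ≤ 2 * n + 1 → ∀ v,
      hF n s Q (2 * n + 1 - m) v * Mop f (2 * n) m w v = Rop (gMF n s Q) m w v := by
  have hhne : ∀ k u, hF n s Q k u ≠ 0 := by
    intro k u; simp only [hF]; exact hψne _ _
  intro m
  induction m with
  | zero =>
    intro _ v
    simp only [Nat.sub_zero, Rop, gMF, Mop]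
    rw [show hF n s Q (2 * n + 2) (v + 2) = 1 from by
      simp only [hF]; exact psiF_top n s Q _ _ le_rfl, div_one]
  | succ m ih =>
    intro hm v
    have ihv := ih (by omega)
    have hx := hkeyf (2 * n + 1 - m) (by omega) (by omega) v
    have h2 := hhne (2 * n + 1 - m) (v + 2)
    simp only [Mop, FsubD, Rop]
    rw [gMF, show 2 * n + 1 - (m + 1) = 2 * n - m by omega,
      show 2 * n + 2 - (m + 1) = 2 * n + 1 - m by omega,
      ← ihv v, ← ihv (v + 2)]
    have expand : hF n s Q (2 * n - m) v / hF n s Q (2 * n + 1 - m) (v + 2)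
        * (hF n s Q (2 * n + 1 - m) v * Mop f (2 * n) m w v
          - hF n s Q (2 * n + 1 - m) (v + 2) * Mop f (2 * n) m w (v + 2))
        = hF n s Q (2 * n - m) v
          * (hF n s Q (2 * n + 1 - m) v / hF n s Q (2 * n + 1 - m) (v + 2)
              * Mop f (2 * n) m w v - Mop f (2 * n) m w (v + 2)) := by
      field_simp
    rw [expand, ← hx, mul_div_assoc, div_self h2, mul_one]

lemma prod_cF (n : ℕ) (hn : 1 ≤ n) (hconst : ℕ → ℂ)
    (hcne : ∀ a, a ≤ n → hcF hconst a ≠ 0) :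
    ∏ j ∈ Finset.range (2 * n + 2), cF hconst n j = 1 := by
  obtain ⟨n', rfl⟩ : ∃ n', n = n' + 1 := ⟨n - 1, by omega⟩
  have p1 : ∀ m, m ≤ n' → ∏ j ∈ Finset.range (m + 1), cF hconst (n' + 1) j
      = hcF hconst m * (hcF hconst (m + 1))⁻¹ := by
    intro m
    induction m with
    | zero =>
      intro _
      rw [Finset.prod_range_one, cF, if_pos rfl]
      simp [hcF]
    | succ m ih =>
      intro hm
      rw [Finset.prod_range_succ, ih (by omega), cF, if_neg (by omega), if_pos (by omega),
        show m + 1 - 1 = m by omega]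
      have c1 := hcne m (by omega)
      have c2 := hcne (m + 1) (by omega)
      have c3 := hcne (m + 1 + 1) (by omega)
      field_simp
  have p2 : ∏ j ∈ Finset.range (n' + 2), cF hconst (n' + 1) j = hcF hconst (n' + 1) := by
    rw [show n' + 2 = (n' + 1) + 1 by omega, Finset.prod_range_succ, p1 n' le_rfl, cF,
      if_neg (by omega), if_neg (by omega), if_pos rfl, show n' + 1 - 1 = n' by omega]
    have c1 := hcne n' (by omega)
    have c2 := hcne (n' + 1) le_rfl
    field_simp
  have p3 : ∏ j ∈ Finset.range (n' + 3), cF hconst (n' + 1) j = 1 := by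
    rw [show n' + 3 = (n' + 2) + 1 by omega, Finset.prod_range_succ, p2, cF,
      if_neg (by omega), if_neg (by omega), if_neg (by omega), if_pos (by omega)]
    exact mul_inv_cancel₀ (hcne (n' + 1) le_rfl)
  have p4 : ∀ d, n' + 3 + d ≤ 2 * (n' + 1) + 2 →
      ∏ j ∈ Finset.range (n' + 3 + d), cF hconst (n' + 1) j = 1 := by
    intro d
    induction d with
    | zero => intro _; exact p3
    | succ d ih =>
      intro hd
      rw [show n' + 3 + (d + 1) = (n' + 3 + d) + 1 by omega, Finset.prod_range_succ,
        ih (by omega), cF, if_neg (by omega), if_neg (by omega), if_neg (by omega),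
        if_neg (by omega), one_mul]
  have := p4 (n' + 1) (by omega)
  rwa [show n' + 3 + (n' + 1) = 2 * (n' + 1) + 2 by omega] at this

theorem reversed_factorization_A2_even
    (n : ℕ) (hn : 1 ≤ n) (N : ℕ) (hN : N = 2 * n)
    (hbar : ℂ) (hbar_ne : hbar ≠ 0) (s : ℂ)
    (hs : s = (Real.pi : ℂ) * Complex.I / (2 * hbar))
    (Q : ℕ → ℂ → ℂ) (hQ0 : ∀ u, Q 0 u = 1)
    (hQne : ∀ a, 1 ≤ a → a ≤ n → ∀ u, Q a u ≠ 0)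
    (hconst : ℕ → ℂ)
    (hQper : ∀ a, 1 ≤ a → a ≤ n → hconst a ≠ 0 ∧
      ∀ u, Q a (u + (Real.pi : ℂ) * Complex.I / hbar) = hconst a * Q a u)
    (Y : ℕ → ℂ → ℂ) (hY : ∀ a u, Y a u = Q a (u - 1) / Q a (u + 1))
    (x : ℕ → ℂ → ℂ)
    (hxa : ∀ a, 1 ≤ a → a ≤ n → ∀ u : ℂ,
      x a u = Y a (u + a) / Y (a - 1) (u + a + 1))
    (hx0 : ∀ u : ℂ, x (n + 1) u = Y n (u + n + 1 + s) / Y n (u + n + 2))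
    (hxbar : ∀ a, 1 ≤ a → a ≤ n → ∀ u : ℂ,
      x (2 * n - a + 2) u = Y (a - 1) (u + 2 * (n : ℂ) - a + 2 + s)
        / Y a (u + 2 * (n : ℂ) - a + 3 + s))
    :
    ∀ w : ℂ → ℂ, ∀ u : ℂ,
      Lop x (N + 1) w u
        = Mop (fun a v => x a (v + (N : ℂ) + 1 - 2 * a + s)) N (N + 1) w u := by
  intro w u
  subst hN
  have hψne := psiF_ne n s Q hQ0 hQne
  have h2s : (Real.pi : ℂ) * Complex.I / hbar = 2 * s := by
    rw [hs]; field_simp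
  have hper : ∀ a, a ≤ n → ∀ v, Q a (v + 2 * s) = hcF hconst a * Q a v := by
    intro a ha v
    rcases Nat.eq_zero_or_pos a with rfl | hpos
    · rw [hQ0, hQ0, hcF, if_pos rfl, one_mul]
    · rw [hcF, if_neg (by omega), ← h2s]
      exact (hQper a hpos ha).2 v
  have hcne : ∀ a, a ≤ n → hcF hconst a ≠ 0 := by
    intro a ha
    rcases Nat.eq_zero_or_pos a with rfl | hpos
    · rw [hcF, if_pos rfl]; exact one_ne_zero
    · rw [hcF, if_neg (by omega)]; exact (hQper a hpos ha).1
  have hkey := key_x n hn s Q Y x hQ0 hQne hY hxa hx0 hxbar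
  set f : ℕ → ℂ → ℂ := fun a v => x a (v + ((2 * n : ℕ) : ℂ) + 1 - 2 * a + s) with hf
  have hkeyf : ∀ k, 1 ≤ k → k ≤ 2 * n + 1 → ∀ v,
      f k v * hF n s Q k (v + 2) = hF n s Q k v := by
    intro k h1 h2 v
    have hx := hkey k h1 h2 (v + 2 * (n : ℂ) + 1 - 2 * k + s)
    rw [hf]
    simp only [hF]
    rw [show v + ((2 * n : ℕ) : ℂ) + 1 - 2 * (k : ℂ) + s
        = v + 2 * (n : ℂ) + 1 - 2 * k + s from by push_cast; ring,
      show v + 2 + 2 * (n : ℂ) + 1 - 2 * (k : ℂ) + s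
        = v + 2 * (n : ℂ) + 1 - 2 * (k : ℂ) + s + 2 from by ring]
    exact hx
  have hA := stepA n s Q x hψne hkey w (2 * n + 1) le_rfl u
  have hB := stepB n s Q f hψne hkeyf w (2 * n + 1) le_rfl u
  have hscale := Rop_scale (gLF n s Q) (gMF n s Q) (cF hconst n) (2 * n + 1)
    (fun j hj v => gM_eq n hn s Q hconst hQ0 hQne hper hcne j (by omega) v) w u
  rw [show 2 * n + 1 + 1 = 2 * n + 2 by omega, prod_cF n hn hconst hcne, one_mul] at hscale
  rw [show 2 * n + 1 - (2 * n + 1) = 0 by omega,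
    show hF n s Q 0 u = 1 from by simp only [hF]; exact psiF_zero n s Q _, one_mul] at hB
  rw [psiF_top n s Q (2 * n + 1 + 1) u (by omega), one_mul] at hA
  rw [hA, ← hscale, hB]
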